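/- (Two-dimensional crossing forces β'(z*) = 0.) Let u₁, u₂, u₃(z), u₄(z) be ℝ⁴-valued with u₃, u₄ differentiable, and suppose at z = z* the span of {u₃(z*), u₄(z*)} equals the span of {u₁, u₂}. Then for β(z) := det[u₁, u₂, u₃(z), u₄(z)] and any matrices with u₃' = A u₃, u₄' = A u₄, one has β(z*) = 0 and β'(z*) = 0, and β''(z*) = 2·det[u₁, u₂, A(z*)u₃(z*), A(z*)u₄(z*)]. -/

import Mathlib

open Matrix

private lemma upd2 (u₁ u₂ v w x : Fin 4 → ℝ) :
    Function.update ![u₁, u₂, v, w] 2 x = ![u₁, u₂, x, w] := by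
  ext i j; fin_cases i <;> simp

private lemma upd3 (u₁ u₂ v w x : Fin 4 → ℝ) :
    Function.update ![u₁, u₂, v, w] 3 x = ![u₁, u₂, v, x] := by
  ext i j; fin_cases i <;> simp

private lemma van3 (u₁ u₂ v w : Fin 4 → ℝ) (a b : ℝ) (hw : a • u₁ + b • u₂ = w) :
    Matrix.detRowAlternating ![u₁, u₂, v, w] = 0 := by
  have h : ![u₁, u₂, v, w] = Function.update ![u₁, u₂, v, w] 3 (a • u₁ + b • u₂) := by
    rw [upd3, hw]
  rw [h, AlternatingMap.map_update_add, AlternatingMap.map_update_smul,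
    AlternatingMap.map_update_smul, upd3, upd3]
  have h1 : Matrix.detRowAlternating ![u₁, u₂, v, u₁] = 0 :=
    AlternatingMap.map_eq_zero_of_eq _ _ (i := 0) (j := 3) rfl (by decide)
  have h2 : Matrix.detRowAlternating ![u₁, u₂, v, u₂] = 0 :=
    AlternatingMap.map_eq_zero_of_eq _ _ (i := 1) (j := 3) rfl (by decide)
  rw [h1, h2]; simp

private lemma van2 (u₁ u₂ v w : Fin 4 → ℝ) (a b : ℝ) (hw : a • u₁ + b • u₂ = w) :
    Matrix.detRowAlternating ![u₁, u₂, w, v] = 0 := by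
  have h : ![u₁, u₂, w, v] = Function.update ![u₁, u₂, w, v] 2 (a • u₁ + b • u₂) := by
    rw [upd2, hw]
  rw [h, AlternatingMap.map_update_add, AlternatingMap.map_update_smul,
    AlternatingMap.map_update_smul, upd2, upd2]
  have h1 : Matrix.detRowAlternating ![u₁, u₂, u₁, v] = 0 :=
    AlternatingMap.map_eq_zero_of_eq _ _ (i := 0) (j := 2) rfl (by decide)
  have h2 : Matrix.detRowAlternating ![u₁, u₂, u₂, v] = 0 :=
    AlternatingMap.map_eq_zero_of_eq _ _ (i := 1) (j := 2) rfl (by decide)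
  rw [h1, h2]; simp

/-- The determinant with rows `u₁, u₂, v, w` as a bilinear map in `(v, w)`. -/
private noncomputable def Dlin (u₁ u₂ : Fin 4 → ℝ) :
    (Fin 4 → ℝ) →ₗ[ℝ] (Fin 4 → ℝ) →ₗ[ℝ] ℝ :=
  LinearMap.mk₂ ℝ (fun v w => Matrix.detRowAlternating ![u₁, u₂, v, w])
    (fun m₁ m₂ w => by
      rw [show ![u₁, u₂, m₁ + m₂, w] = Function.update ![u₁, u₂, m₁, w] 2 (m₁ + m₂) from
        (upd2 ..).symm, AlternatingMap.map_update_add, upd2, upd2])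
    (fun c m w => by
      rw [show ![u₁, u₂, c • m, w] = Function.update ![u₁, u₂, m, w] 2 (c • m) from
        (upd2 ..).symm, AlternatingMap.map_update_smul, upd2])
    (fun v m₁ m₂ => by
      rw [show ![u₁, u₂, v, m₁ + m₂] = Function.update ![u₁, u₂, v, m₁] 3 (m₁ + m₂) from
        (upd3 ..).symm, AlternatingMap.map_update_add, upd3, upd3])
    (fun c v m => by
      rw [show ![u₁, u₂, v, c • m] = Function.update ![u₁, u₂, v, m] 3 (c • m) from
        (upd3 ..).symm, AlternatingMap.map_update_smul, upd3])

/-- `Dlin` upgraded to a continuous bilinear map. -/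
private noncomputable def Dc (u₁ u₂ : Fin 4 → ℝ) :
    (Fin 4 → ℝ) →L[ℝ] (Fin 4 → ℝ) →L[ℝ] ℝ :=
  LinearMap.toContinuousLinearMap
    { toFun := fun v => LinearMap.toContinuousLinearMap (Dlin u₁ u₂ v)
      map_add' := fun x y => by simp [map_add]
      map_smul' := fun c x => by simp [_root_.map_smul] }

private lemma Dc_apply (u₁ u₂ v w : Fin 4 → ℝ) :
    Dc u₁ u₂ v w = Matrix.detRowAlternating ![u₁, u₂, v, w] := rfl

private lemma det_tr (u₁ u₂ v w : Fin 4 → ℝ) :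
    (Matrix.of fun i j => ![u₁, u₂, v, w] j i).det
      = Matrix.detRowAlternating ![u₁, u₂, v, w] := by
  rw [← Matrix.det_transpose]
  rfl

theorem stmt_19 (u₁ u₂ : Fin 4 → ℝ) (u₃ u₄ : ℝ → Fin 4 → ℝ)
    (A : ℝ → Matrix (Fin 4) (Fin 4) ℝ) (hA : Differentiable ℝ (fun z i j => A z i j : ℝ → Fin 4 → Fin 4 → ℝ))
    (hu₃ : ∀ z, HasDerivAt u₃ (A z *ᵥ u₃ z) z)
    (hu₄ : ∀ z, HasDerivAt u₄ (A z *ᵥ u₄ z) z)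
    (zs : ℝ)
    (hspan : Submodule.span ℝ ({u₃ zs, u₄ zs} : Set (Fin 4 → ℝ))
      = Submodule.span ℝ ({u₁, u₂} : Set (Fin 4 → ℝ))) :
    let β : ℝ → ℝ := fun z => (Matrix.of fun i j => ![u₁, u₂, u₃ z, u₄ z] j i).det
    β zs = 0 ∧ deriv β zs = 0 ∧
      deriv (deriv β) zs =
        2 * (Matrix.of fun i j => ![u₁, u₂, A zs *ᵥ u₃ zs, A zs *ᵥ u₄ zs] j i).det := by
  intro β
  set D := Dc u₁ u₂ with hD
  have hβeq : β = fun z => D (u₃ z) (u₄ z) := by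
    funext z
    rw [hD, Dc_apply]
    exact det_tr u₁ u₂ (u₃ z) (u₄ z)
  -- membership of u₃ zs, u₄ zs in span {u₁, u₂}
  have hm3 : u₃ zs ∈ Submodule.span ℝ ({u₁, u₂} : Set (Fin 4 → ℝ)) := by
    rw [← hspan]; exact Submodule.subset_span (Set.mem_insert _ _)
  have hm4 : u₄ zs ∈ Submodule.span ℝ ({u₁, u₂} : Set (Fin 4 → ℝ)) := by
    rw [← hspan]; exact Submodule.subset_span (Set.mem_insert_of_mem _ rfl)
  obtain ⟨a₃, b₃, hab₃⟩ := Submodule.mem_span_pair.mp hm3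
  obtain ⟨a₄, b₄, hab₄⟩ := Submodule.mem_span_pair.mp hm4
  have hv3 : ∀ v, D (u₃ zs) v = 0 := fun v => by
    rw [hD, Dc_apply]; exact van2 u₁ u₂ v _ a₃ b₃ hab₃
  have hv4 : ∀ v, D v (u₄ zs) = 0 := fun v => by
    rw [hD, Dc_apply]; exact van3 u₁ u₂ v _ a₄ b₄ hab₄
  -- differentiability helpers
  have hAij : ∀ i j, Differentiable ℝ (fun z => A z i j) := fun i j =>
    differentiable_pi.mp (differentiable_pi.mp hA i) j
  have hu₃d : Differentiable ℝ u₃ := fun z => (hu₃ z).differentiableAt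
  have hu₄d : Differentiable ℝ u₄ := fun z => (hu₄ z).differentiableAt
  have hf : Differentiable ℝ (fun z => A z *ᵥ u₃ z) := by
    apply differentiable_pi.mpr
    intro i
    have : (fun z => (A z *ᵥ u₃ z) i) = fun z => ∑ j, A z i j * u₃ z j := by
      funext z; simp [Matrix.mulVec, dotProduct]
    rw [this]
    exact Differentiable.fun_sum fun j _ => (hAij i j).mul (differentiable_pi.mp hu₃d j)
  have hg : Differentiable ℝ (fun z => A z *ᵥ u₄ z) := by
    apply differentiable_pi.mpr
    intro i
    have : (fun z => (A z *ᵥ u₄ z) i) = fun z => ∑ j, A z i j * u₄ z j := by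
      funext z; simp [Matrix.mulVec, dotProduct]
    rw [this]
    exact Differentiable.fun_sum fun j _ => (hAij i j).mul (differentiable_pi.mp hu₄d j)
  -- first derivative of β
  have hc : ∀ z, HasDerivAt (fun z => D (u₃ z)) (D (A z *ᵥ u₃ z)) z := fun z =>
    (D.hasFDerivAt (x := u₃ z)).comp_hasDerivAt z (hu₃ z)
  have hβ' : ∀ z, HasDerivAt β (D (A z *ᵥ u₃ z) (u₄ z) + D (u₃ z) (A z *ᵥ u₄ z)) z := by
    intro z
    rw [hβeq]
    exact (hc z).clm_apply (hu₄ z)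
  have hderiv : deriv β = fun z => D (A z *ᵥ u₃ z) (u₄ z) + D (u₃ z) (A z *ᵥ u₄ z) := by
    funext z; exact (hβ' z).deriv
  -- second derivative at zs
  have hf' : HasDerivAt (fun z => A z *ᵥ u₃ z) (deriv (fun z => A z *ᵥ u₃ z) zs) zs :=
    (hf zs).hasDerivAt
  have hg' : HasDerivAt (fun z => A z *ᵥ u₄ z) (deriv (fun z => A z *ᵥ u₄ z) zs) zs :=
    (hg zs).hasDerivAt
  have hc2 : HasDerivAt (fun z => D (A z *ᵥ u₃ z)) (D (deriv (fun z => A z *ᵥ u₃ z) zs)) zs :=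
    (D.hasFDerivAt (x := A zs *ᵥ u₃ zs)).comp_hasDerivAt zs hf'
  have ht1 : HasDerivAt (fun z => D (A z *ᵥ u₃ z) (u₄ z))
      (D (deriv (fun z => A z *ᵥ u₃ z) zs) (u₄ zs) + D (A zs *ᵥ u₃ zs) (A zs *ᵥ u₄ zs)) zs :=
    hc2.clm_apply (hu₄ zs)
  have ht2 : HasDerivAt (fun z => D (u₃ z) (A z *ᵥ u₄ z))
      (D (A zs *ᵥ u₃ zs) (A zs *ᵥ u₄ zs) + D (u₃ zs) (deriv (fun z => A z *ᵥ u₄ z) zs)) zs :=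
    (hc zs).clm_apply hg'
  have hβ'' : HasDerivAt (deriv β)
      ((D (deriv (fun z => A z *ᵥ u₃ z) zs) (u₄ zs) + D (A zs *ᵥ u₃ zs) (A zs *ᵥ u₄ zs))
        + (D (A zs *ᵥ u₃ zs) (A zs *ᵥ u₄ zs) + D (u₃ zs) (deriv (fun z => A z *ᵥ u₄ z) zs))) zs := by
    rw [hderiv]
    exact ht1.add ht2
  refine ⟨?_, ?_, ?_⟩
  · rw [hβeq]
    exact hv4 (u₃ zs)
  · rw [(hβ' zs).deriv, hv4 _, hv3 _]
    ring
  · rw [hβ''.deriv, hv4 _, hv3 _, det_tr, ← Dc_apply, ← hD]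
    ring
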